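/- arXiv:1510.05130 — 2 statements merged into one kernel-verified Lean document; each statement's English description precedes it below -/
import Mathlib

section
/- Let A = [a_ij] ∈ ℂ^{n×n}, n ≥ 2, be a DD matrix. Then there exists a nonempty proper subset S of N such that A is S-SDD if and only if T(A) = ∅ or the principal submatrix A|_{T(A)²} is an SDD matrix. -/
open scoped BigOperators

noncomputable section

/-- Deleted `i`-th row sum of `|A|`, restricted to the index set `S`
    (i.e. `r_i^S(A) = ∑_{j ∈ S \ {i}} |a_{ij}|`). -/
def rowSumOn {ι : Type*} [Fintype ι] [DecidableEq ι]
    (A : Matrix ι ι ℂ) (S : Finset ι) (i : ι) : ℝ :=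
  ∑ j ∈ S.erase i, ‖A i j‖

/-- Deleted `i`-th row sum `r_i(A) = ∑_{j ≠ i} |a_{ij}|`. -/
def rowSum {ι : Type*} [Fintype ι] [DecidableEq ι]
    (A : Matrix ι ι ℂ) (i : ι) : ℝ :=
  rowSumOn A Finset.univ i

/-- `A` is strictly diagonally dominant (SDD). -/
def IsSDD {ι : Type*} [Fintype ι] [DecidableEq ι] (A : Matrix ι ι ℂ) : Prop :=
  ∀ i, rowSum A i < ‖A i i‖

/-- `A` is diagonally dominant (DD). -/
def IsDD {ι : Type*} [Fintype ι] [DecidableEq ι] (A : Matrix ι ι ℂ) : Prop :=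
  ∀ i, rowSum A i ≤ ‖A i i‖

/-- `A` is DD+ : diagonally dominant with at least one strictly dominant row. -/
def IsDDplus {ι : Type*} [Fintype ι] [DecidableEq ι] (A : Matrix ι ι ℂ) : Prop :=
  IsDD A ∧ ∃ i, rowSum A i < ‖A i i‖

/-- `A` is an H-matrix: there is a diagonal matrix `D` with positive diagonal
    entries such that `A * D` is SDD. -/
def IsHMatrix {ι : Type*} [Fintype ι] [DecidableEq ι] (A : Matrix ι ι ℂ) : Prop :=
  ∃ d : ι → ℝ, (∀ i, 0 < d i) ∧ IsSDD (A * Matrix.diagonal fun i => (d i : ℂ))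

/-- `T(A)`: the set of indices of non-SDD rows of `A`. -/
def TSet {ι : Type*} [Fintype ι] [DecidableEq ι] (A : Matrix ι ι ℂ) : Finset ι :=
  Finset.univ.filter fun i => ‖A i i‖ ≤ rowSum A i

/-- The principal submatrix `A|_{M²}` of `A` corresponding to the index set `M`. -/
def subMat {ι : Type*} [Fintype ι] [DecidableEq ι]
    (A : Matrix ι ι ℂ) (M : Finset ι) : Matrix {i // i ∈ M} {i // i ∈ M} ℂ :=
  Matrix.of fun i j => A i.val j.val

/-- There exists a nonzero elements chain `a_{i₀i₁}, a_{i₁i₂}, …, a_{i_{r-1}i_r}`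
    starting at `i₀` and ending at some `i_r ∉ T(A)`. -/
def HasChainOut {ι : Type*} [Fintype ι] [DecidableEq ι]
    (A : Matrix ι ι ℂ) (i₀ : ι) : Prop :=
  ∃ (r : ℕ) (c : Fin (r + 1) → ι), 0 < r ∧ c 0 = i₀ ∧
    (∀ k : Fin r, A (c k.castSucc) (c k.succ) ≠ 0) ∧ c (Fin.last r) ∉ TSet A

/-- `S` is an interwoven set of indices for `A`: `S` is a proper subset of `N`
    and either `|S| ≤ 1`, or `|S| = s > 1` and there exist distinct
    `p₁,…,p_{s-1} ∈ S` and `q₁,…,q_{s-1}` with `q₁ ∈ N \ S`, `a_{p₁q₁} ≠ 0`, and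
    `q_i ∈ (N \ S) ∪ {p₁,…,p_{i-1}}`, `a_{p_iq_i} ≠ 0` for `i = 2,…,s-1`. -/
def Interwoven {ι : Type*} [Fintype ι] [DecidableEq ι]
    (A : Matrix ι ι ℂ) (S : Finset ι) : Prop :=
  S ⊂ Finset.univ ∧
    (S.card ≤ 1 ∨
      (1 < S.card ∧ ∃ p q : Fin (S.card - 1) → ι,
        Function.Injective p ∧ (∀ i, p i ∈ S) ∧
        ∀ i, A (p i) (q i) ≠ 0 ∧ (q i ∉ S ∨ ∃ j, j < i ∧ q i = p j)))

/-- The comparison matrix `ℳ(A)`. -/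
def CompMat {ι : Type*} [Fintype ι] [DecidableEq ι] (A : Matrix ι ι ℂ) : Matrix ι ι ℝ :=
  Matrix.of fun i j => if i = j then ‖A i i‖ else -‖A i j‖


/-- `A` is `S`-SDD for a nonempty proper subset `S` of the index set. -/
def IsSSDD {ι : Type*} [Fintype ι] [DecidableEq ι]
    (A : Matrix ι ι ℂ) (S : Finset ι) : Prop :=
  (∀ i ∈ S, rowSumOn A S i < ‖A i i‖) ∧
    ∀ i ∈ S, ∀ j ∈ Sᶜ, rowSumOn A Sᶜ i * rowSumOn A S j <
      (‖A i i‖ - rowSumOn A S i) *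
        (‖A j j‖ - rowSumOn A Sᶜ j)

lemma rowSumOn_nonneg {ι : Type*} [Fintype ι] [DecidableEq ι]
    (A : Matrix ι ι ℂ) (S : Finset ι) (i : ι) : 0 ≤ rowSumOn A S i :=
  Finset.sum_nonneg fun _ _ => norm_nonneg _

lemma rowSumOn_mono {ι : Type*} [Fintype ι] [DecidableEq ι]
    (A : Matrix ι ι ℂ) {S S' : Finset ι} (h : S ⊆ S') (i : ι) :
    rowSumOn A S i ≤ rowSumOn A S' i :=
  Finset.sum_le_sum_of_subset_of_nonneg (Finset.erase_subset_erase _ h)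
    (fun _ _ _ => norm_nonneg _)

lemma rowSumOn_add_compl {ι : Type*} [Fintype ι] [DecidableEq ι]
    (A : Matrix ι ι ℂ) (S : Finset ι) (i : ι) :
    rowSumOn A S i + rowSumOn A Sᶜ i = rowSum A i := by
  rw [rowSumOn, rowSumOn, rowSum, rowSumOn, ← Finset.sum_union
    (Finset.disjoint_of_subset_left (Finset.erase_subset _ _)
      (Finset.disjoint_of_subset_right (Finset.erase_subset _ _) disjoint_compl_right))]
  rw [← Finset.erase_union_distrib, Finset.union_compl]

lemma rowSum_subMat {ι : Type*} [Fintype ι] [DecidableEq ι]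
    (A : Matrix ι ι ℂ) (M : Finset ι) (i : {x // x ∈ M}) :
    rowSum (subMat A M) i = rowSumOn A M i.val := by
  rw [rowSum, rowSumOn, rowSumOn,
    Finset.sum_erase_eq_sub (Finset.mem_univ i),
    Finset.sum_erase_eq_sub i.2]
  congr 1
  exact Finset.sum_coe_sort M fun x => ‖A i.val x‖

lemma mem_TSet_iff {ι : Type*} [Fintype ι] [DecidableEq ι]
    (A : Matrix ι ι ℂ) (i : ι) :
    i ∈ TSet A ↔ ‖A i i‖ ≤ rowSum A i := by
  simp [TSet]

/-- A DD matrix `A ∈ ℂⁿˣⁿ`, `n ≥ 2`, is `S`-SDD for some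
nonempty proper subset `S` of `N` if and only if `T(A) = ∅` or `A|_{T(A)²}`
is SDD. -/
theorem ssdd_iff_tset_sdd (n : ℕ) (hn : 2 ≤ n)
    (A : Matrix (Fin n) (Fin n) ℂ) (hDD : IsDD A) :
    (∃ S : Finset (Fin n), S.Nonempty ∧ S ≠ Finset.univ ∧ IsSSDD A S) ↔
      (TSet A = ∅ ∨ IsSDD (subMat A (TSet A))) := by
  -- For i ∈ T(A), the diagonal equals the row sum.
  have hTeq : ∀ i ∈ TSet A, ‖A i i‖ = rowSum A i := fun i hi =>
    le_antisymm ((mem_TSet_iff A i).1 hi) (hDD i)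
  constructor
  · rintro ⟨S, hSne, hSuniv, hSSDD⟩
    by_cases hT : TSet A = ∅
    · exact Or.inl hT
    · right
      -- key claim: for every i ∈ T(A), rowSumOn A (TSet A)ᶜ i > 0
      have key : ∀ i ∈ TSet A, 0 < rowSumOn A (TSet A)ᶜ i := by
        by_cases hTS : ∃ i₀, i₀ ∈ TSet A ∧ i₀ ∈ S
        · -- Case A: T ∩ S ≠ ∅, deduce T ⊆ S
          obtain ⟨i₀, hi₀T, hi₀S⟩ := hTS
          have hpos : 0 < rowSumOn A Sᶜ i₀ := by
            have h1 := hSSDD.1 i₀ hi₀S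
            have h2 := rowSumOn_add_compl A S i₀
            have h3 := hTeq i₀ hi₀T
            linarith
          have hTsubS : TSet A ⊆ S := by
            intro j hj
            by_contra hjS
            have hjSc : j ∈ Sᶜ := Finset.mem_compl.2 hjS
            have h2 := hSSDD.2 i₀ hi₀S j hjSc
            rw [hTeq i₀ hi₀T, ← rowSumOn_add_compl A S i₀] at h2
            have h2' : rowSumOn A Sᶜ i₀ * rowSumOn A S j <
                rowSumOn A Sᶜ i₀ * (‖A j j‖ - rowSumOn A Sᶜ j) := by
              have : rowSumOn A S i₀ + rowSumOn A Sᶜ i₀ - rowSumOn A S i₀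
                  = rowSumOn A Sᶜ i₀ := by ring
              rw [this] at h2; exact h2
            have h4 : rowSumOn A S j < ‖A j j‖ - rowSumOn A Sᶜ j :=
              lt_of_mul_lt_mul_left h2' (le_of_lt hpos)
            have h5 := rowSumOn_add_compl A S j
            have h6 := hTeq j hj
            linarith
          intro i hi
          have hiS := hTsubS hi
          have h1 := hSSDD.1 i hiS
          have h2 := rowSumOn_add_compl A S i
          have h3 := hTeq i hi
          have h4 : 0 < rowSumOn A Sᶜ i := by linarith
          have h5 : Sᶜ ⊆ (TSet A)ᶜ := Finset.compl_subset_compl.2 hTsubS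
          exact lt_of_lt_of_le h4 (rowSumOn_mono A h5 i)
        · -- Case B: T ∩ S = ∅
          push_neg at hTS
          obtain ⟨j₀, hj₀S⟩ := hSne
          intro i hi
          have hiSc : i ∈ Sᶜ := Finset.mem_compl.2 fun h => hTS i hi h
          have h2 := hSSDD.2 j₀ hj₀S i hiSc
          have h3 := hTeq i hi
          have h4 := rowSumOn_add_compl A S i
          have hdiag : ‖A i i‖ - rowSumOn A Sᶜ i = rowSumOn A S i := by
            linarith
          rw [hdiag] at h2
          have hSpos : 0 < rowSumOn A S i := by
            by_contra hc
            push_neg at hc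
            have h0 : rowSumOn A S i = 0 :=
              le_antisymm hc (rowSumOn_nonneg A S i)
            rw [h0] at h2
            simp at h2
          have hSsub : S ⊆ (TSet A)ᶜ := fun x hx =>
            Finset.mem_compl.2 fun hxT => hTS x hxT hx
          exact lt_of_lt_of_le hSpos (rowSumOn_mono A hSsub i)
      intro i
      rw [rowSum_subMat]
      show rowSumOn A (TSet A) i.val < ‖A i.val i.val‖
      have h1 := rowSumOn_add_compl A (TSet A) i.val
      have h2 := hTeq i.val i.2
      have h3 := key i.val i.2
      linarith
  · rintro (hT | hSDD)
    · -- T(A) = ∅ : A is SDD, take S = {0}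
      have hA : ∀ i, rowSum A i < ‖A i i‖ := by
        intro i
        by_contra h
        push_neg at h
        have : i ∈ TSet A := (mem_TSet_iff A i).2 h
        rw [hT] at this
        exact absurd this (Finset.notMem_empty i)
      have h0 : 0 < n := by omega
      refine ⟨{⟨0, h0⟩}, Finset.singleton_nonempty _, ?_, ?_, ?_⟩
      · intro h
        have := Finset.card_univ (α := Fin n)
        rw [← h, Finset.card_singleton, Fintype.card_fin] at this
        omega
      · intro i hi
        exact lt_of_le_of_lt (rowSumOn_mono A (Finset.subset_univ _) i) (hA i)
      · intro i hi j hj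
        have hi1 : rowSumOn A {⟨0, h0⟩} i + rowSumOn A {⟨0, h0⟩}ᶜ i = rowSum A i :=
          rowSumOn_add_compl A _ i
        have hj1 : rowSumOn A {⟨0, h0⟩} j + rowSumOn A {⟨0, h0⟩}ᶜ j = rowSum A j :=
          rowSumOn_add_compl A _ j
        have hi2 : rowSumOn A {⟨0, h0⟩}ᶜ i < ‖A i i‖ - rowSumOn A {⟨0, h0⟩} i := by
          have := hA i; linarith
        have hj2 : rowSumOn A {⟨0, h0⟩} j < ‖A j j‖ - rowSumOn A {⟨0, h0⟩}ᶜ j := by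
          have := hA j; linarith
        calc rowSumOn A {⟨0, h0⟩}ᶜ i * rowSumOn A {⟨0, h0⟩} j
            ≤ rowSumOn A {⟨0, h0⟩}ᶜ i * (‖A j j‖ - rowSumOn A {⟨0, h0⟩}ᶜ j) :=
              mul_le_mul_of_nonneg_left (le_of_lt hj2) (rowSumOn_nonneg A _ i)
          _ < (‖A i i‖ - rowSumOn A {⟨0, h0⟩} i) *
              (‖A j j‖ - rowSumOn A {⟨0, h0⟩}ᶜ j) := by
              apply mul_lt_mul_of_pos_right hi2
              have := rowSumOn_nonneg A {⟨0, h0⟩} j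
              linarith
    · -- T(A) ≠ ∅ (or possibly empty) and A|_T SDD : take S = T(A)
      by_cases hT : TSet A = ∅
      ·
        have hA : ∀ i, rowSum A i < ‖A i i‖ := by
          intro i
          by_contra h
          push_neg at h
          have : i ∈ TSet A := (mem_TSet_iff A i).2 h
          rw [hT] at this
          exact absurd this (Finset.notMem_empty i)
        have h0 : 0 < n := by omega
        refine ⟨{⟨0, h0⟩}, Finset.singleton_nonempty _, ?_, ?_, ?_⟩
        · intro h
          have := Finset.card_univ (α := Fin n)
          rw [← h, Finset.card_singleton, Fintype.card_fin] at this
          omega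
        · intro i hi
          exact lt_of_le_of_lt (rowSumOn_mono A (Finset.subset_univ _) i) (hA i)
        · intro i hi j hj
          have hi1 := rowSumOn_add_compl A ({⟨0, h0⟩} : Finset (Fin n)) i
          have hj1 := rowSumOn_add_compl A ({⟨0, h0⟩} : Finset (Fin n)) j
          have hi2 : rowSumOn A {⟨0, h0⟩}ᶜ i < ‖A i i‖ - rowSumOn A {⟨0, h0⟩} i := by
            have := hA i; linarith
          have hj2 : rowSumOn A {⟨0, h0⟩} j < ‖A j j‖ - rowSumOn A {⟨0, h0⟩}ᶜ j := by
            have := hA j; linarith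
          calc rowSumOn A {⟨0, h0⟩}ᶜ i * rowSumOn A {⟨0, h0⟩} j
              ≤ rowSumOn A {⟨0, h0⟩}ᶜ i * (‖A j j‖ - rowSumOn A {⟨0, h0⟩}ᶜ j) :=
                mul_le_mul_of_nonneg_left (le_of_lt hj2) (rowSumOn_nonneg A _ i)
            _ < _ := by
                apply mul_lt_mul_of_pos_right hi2
                have := rowSumOn_nonneg A ({⟨0, h0⟩} : Finset (Fin n)) j
                linarith
      · have hTne : (TSet A).Nonempty := Finset.nonempty_of_ne_empty hT
        -- submatrix SDD in terms of rowSumOn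
        have hsub : ∀ i ∈ TSet A, rowSumOn A (TSet A) i < ‖A i i‖ := by
          intro i hi
          have := hSDD ⟨i, hi⟩
          rwa [rowSum_subMat] at this
        have hTuniv : TSet A ≠ Finset.univ := by
          intro h
          obtain ⟨i, hi⟩ := hTne
          have h1 := hsub i hi
          have h2 := hTeq i hi
          rw [h] at h1
          rw [rowSum] at h2
          linarith
        refine ⟨TSet A, hTne, hTuniv, hsub, ?_⟩
        intro i hi j hj
        have h1 := rowSumOn_add_compl A (TSet A) i
        have h2 := hTeq i hi
        have hb : ‖A i i‖ - rowSumOn A (TSet A) i = rowSumOn A (TSet A)ᶜ i := by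
          linarith
        have hbpos : 0 < rowSumOn A (TSet A)ᶜ i := by
          have := hsub i hi; linarith
        have hjT : j ∉ TSet A := Finset.mem_compl.1 hj
        have hj1 : rowSum A j < ‖A j j‖ := by
          by_contra h
          push_neg at h
          exact hjT ((mem_TSet_iff A j).2 h)
        have hj2 := rowSumOn_add_compl A (TSet A) j
        have hj3 : rowSumOn A (TSet A) j < ‖A j j‖ - rowSumOn A (TSet A)ᶜ j := by
          linarith
        rw [hb]
        exact mul_lt_mul_of_pos_left hj3 hbpos


end
end

section
/- Let A = [a_ij] ∈ ℂ^{n×n}, n ≥ 2, be a DD matrix. Then A is an H-matrix if and only if T(A) = ∅, or both (i) the principal submatrix A|_{T(A)²} is an H-matrix and (ii) for every j ∈ N \ T(A), ‖ℳ(A|_{T(A)²})^{-1} · r^{T̄}(A)‖_∞ · r_j^{T(A)}(A) < |a_jj| − r_j^{N \ T(A)}(A), where r^{T̄}(A) is the vector with components r_i^{N \ T(A)}(A) for i ∈ T(A). -/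
open scoped BigOperators

noncomputable section

section HuangAux

variable {ι : Type*} [Fintype ι] [DecidableEq ι]

lemma abs_mul_real (a : ℂ) (t : ℝ) (ht : 0 ≤ t) :
    ‖a * (t : ℂ)‖ = ‖a‖ * t := by
  rw [norm_mul, Complex.norm_real, Real.norm_eq_abs, abs_of_nonneg ht]

omit [Fintype ι] in
lemma sum_subtype_erase (T : Finset ι) (f : ι → ℝ) (i : {x // x ∈ T}) :
    ∑ j ∈ (Finset.univ.erase i : Finset {x // x ∈ T}), f j.val
      = ∑ j ∈ T.erase i.val, f j := by
  rw [Finset.sum_erase_eq_sub (Finset.mem_univ i), Finset.sum_erase_eq_sub i.2,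
    ← Finset.sum_coe_sort T f]

lemma erase_split (S : Finset ι) (i : ι) (g : ι → ℝ) :
    ∑ j ∈ Finset.univ.erase i, g j
      = ∑ j ∈ S.erase i, g j + ∑ j ∈ Sᶜ.erase i, g j := by
  rw [← Finset.sum_union (disjoint_compl_right.mono (Finset.erase_subset _ _)
      (Finset.erase_subset _ _)), ← Finset.erase_union_distrib, Finset.union_compl]

lemma rowSum_mul_diag (A : Matrix ι ι ℂ) (d : ι → ℝ) (hd : ∀ i, 0 ≤ d i) (i : ι) :
    rowSum (A * Matrix.diagonal fun i => ((d i : ℝ) : ℂ)) i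
      = ∑ j ∈ Finset.univ.erase i, ‖A i j‖ * d j := by
  unfold rowSum rowSumOn
  refine Finset.sum_congr rfl fun j _ => ?_
  rw [Matrix.mul_diagonal, abs_mul_real _ _ (hd j)]

lemma compMat_det_isUnit (B : Matrix ι ι ℂ) (h : IsHMatrix B) :
    IsUnit (CompMat B).det := by
  obtain ⟨y, hy, hS⟩ := h
  rw [isUnit_iff_ne_zero]
  have hdet : ((CompMat B) * Matrix.diagonal y).det ≠ 0 := by
    apply det_ne_zero_of_sum_row_lt_diag
    intro k
    have hk := hS k
    rw [rowSum_mul_diag B y (fun i => (hy i).le) k] at hk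
    have hdiag : ‖(B * Matrix.diagonal fun i => ((y i : ℝ) : ℂ)) k k‖
        = ‖B k k‖ * y k := by
      rw [Matrix.mul_diagonal, abs_mul_real _ _ (hy k).le]
    rw [hdiag] at hk
    have e1 : ∀ j ∈ Finset.univ.erase k,
        ‖(CompMat B * Matrix.diagonal y) k j‖ = ‖B k j‖ * y j := by
      intro j hj
      have hne : k ≠ j := (Finset.ne_of_mem_erase hj).symm
      rw [Matrix.mul_diagonal, Real.norm_eq_abs]
      simp only [CompMat, Matrix.of_apply, if_neg hne]
      rw [abs_mul, abs_neg, abs_of_nonneg (norm_nonneg _), abs_of_pos (hy j)]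
    have e2 : ‖(CompMat B * Matrix.diagonal y) k k‖ = ‖B k k‖ * y k := by
      rw [Matrix.mul_diagonal, Real.norm_eq_abs]
      have hcc : CompMat B k k = ‖B k k‖ := by simp [CompMat]
      rw [hcc, abs_of_nonneg (mul_nonneg (norm_nonneg _) (hy k).le)]
    rw [e2, Finset.sum_congr rfl e1]
    exact hk
  intro h0
  apply hdet
  rw [Matrix.det_mul, h0, zero_mul]

end HuangAux

/-- Huang's characterization. A DD matrix `A ∈ ℂⁿˣⁿ`, `n ≥ 2`,
is an H-matrix iff `T(A) = ∅`, or `A|_{T(A)²}` is an H-matrix and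
`‖ℳ(A|_{T(A)²})⁻¹ ⬝ r^{T̄}(A)‖_∞ ⬝ r_j^{T(A)}(A) < |a_jj| − r_j^{T̄}(A)` for
every `j ∉ T(A)`. -/
theorem huang_characterization (n : ℕ) (hn : 2 ≤ n)
    (A : Matrix (Fin n) (Fin n) ℂ) (hDD : IsDD A) :
    IsHMatrix A ↔
      (TSet A = ∅ ∨
        (IsHMatrix (subMat A (TSet A)) ∧
          ∀ j ∉ TSet A,
            ‖Matrix.mulVec (CompMat (subMat A (TSet A)))⁻¹
                (fun i : {i // i ∈ TSet A} => rowSumOn A (TSet A)ᶜ i.val)‖ *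
              rowSumOn A (TSet A) j <
            ‖A j j‖ - rowSumOn A (TSet A)ᶜ j)) := by
  have hmemT : ∀ i, i ∈ TSet A ↔ ‖A i i‖ ≤ rowSum A i := by
    intro i; simp [TSet]
  have hTeq : ∀ i ∈ TSet A, ‖A i i‖ = rowSum A i :=
    fun i hi => le_antisymm ((hmemT i).mp hi) (hDD i)
  have hTlt : ∀ i, i ∉ TSet A → rowSum A i < ‖A i i‖ :=
    fun i hi => not_le.mp (fun h => hi ((hmemT i).mpr h))
  constructor
  · intro hA
    by_cases hT : TSet A = ∅
    · exact Or.inl hT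
    right
    have hsub : IsHMatrix (subMat A (TSet A)) := by
      obtain ⟨d, hd, hS⟩ := hA
      refine ⟨fun i => d i.val, fun i => hd _, fun i => ?_⟩
      have key := hS i.val
      rw [rowSum_mul_diag A d (fun j => (hd j).le)] at key
      have hdiag : ‖(A * Matrix.diagonal fun j => ((d j : ℝ) : ℂ)) i.val i.val‖
          = ‖A i.val i.val‖ * d i.val := by
        rw [Matrix.mul_diagonal, abs_mul_real _ _ (hd _).le]
      rw [hdiag] at key
      show rowSum (subMat A (TSet A) * Matrix.diagonal
          fun j : {x // x ∈ TSet A} => ((d j.val : ℝ) : ℂ)) i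
        < ‖(subMat A (TSet A) * Matrix.diagonal
          fun j : {x // x ∈ TSet A} => ((d j.val : ℝ) : ℂ)) i i‖
      have h1 : rowSum (subMat A (TSet A) * Matrix.diagonal
          fun j : {x // x ∈ TSet A} => ((d j.val : ℝ) : ℂ)) i
          = ∑ j ∈ (TSet A).erase i.val, ‖A i.val j‖ * d j := by
        rw [rowSum_mul_diag (subMat A (TSet A)) (fun j => d j.val) (fun j => (hd _).le) i]
        exact sum_subtype_erase (TSet A) (fun j => ‖A i.val j‖ * d j) i
      have hdiag2 : ‖(subMat A (TSet A) * Matrix.diagonal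
            fun j : {x // x ∈ TSet A} => ((d j.val : ℝ) : ℂ)) i i‖
          = ‖A i.val i.val‖ * d i.val := by
        rw [Matrix.mul_diagonal, abs_mul_real _ _ (hd _).le]; rfl
      rw [h1, hdiag2]
      calc ∑ j ∈ (TSet A).erase i.val, ‖A i.val j‖ * d j
          ≤ ∑ j ∈ Finset.univ.erase i.val, ‖A i.val j‖ * d j := by
            apply Finset.sum_le_sum_of_subset_of_nonneg
            · exact Finset.erase_subset_erase _ (Finset.subset_univ _)
            · intro j _ _; exact mul_nonneg (norm_nonneg _) (hd j).le
        _ < _ := key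
    refine ⟨hsub, ?_⟩
    have hdet := compMat_det_isUnit _ hsub
    have hNE : Nonempty {i // i ∈ TSet A} :=
      Finset.nonempty_coe_sort.mpr (Finset.nonempty_iff_ne_empty.mpr hT)
    have hMone : (CompMat (subMat A (TSet A))).mulVec 1
        = (fun i : {i // i ∈ TSet A} => rowSumOn A (TSet A)ᶜ i.val) := by
      funext i
      have hsplit := erase_split (TSet A) i.val (fun j => ‖A i.val j‖)
      have hieq := hTeq i.val i.2
      simp only [Matrix.mulVec, dotProduct, Pi.one_apply, mul_one]
      rw [← Finset.add_sum_erase _ _ (Finset.mem_univ i)]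
      have h2 : ∑ j ∈ Finset.univ.erase i, CompMat (subMat A (TSet A)) i j
          = -∑ j ∈ (TSet A).erase i.val, ‖A i.val j‖ := by
        rw [← sum_subtype_erase (TSet A) (fun j => ‖A i.val j‖) i,
          ← Finset.sum_neg_distrib]
        refine Finset.sum_congr rfl fun j hj => ?_
        have hne : i ≠ j := (Finset.ne_of_mem_erase hj).symm
        simp only [CompMat, subMat, Matrix.of_apply, if_neg hne]
      have h3 : CompMat (subMat A (TSet A)) i i = ‖A i.val i.val‖ := by
        simp [CompMat, subMat]
      rw [h2, h3]
      unfold rowSum rowSumOn at hieq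
      unfold rowSumOn
      linarith
    intro j hj
    have hx : Matrix.mulVec (CompMat (subMat A (TSet A)))⁻¹
        (fun i : {i // i ∈ TSet A} => rowSumOn A (TSet A)ᶜ i.val) = 1 := by
      rw [← hMone, Matrix.mulVec_mulVec, Matrix.nonsing_inv_mul _ hdet, Matrix.one_mulVec]
    rw [hx]
    have hnorm : ‖(1 : {i // i ∈ TSet A} → ℝ)‖ = 1 := by
      rw [show (1 : {i // i ∈ TSet A} → ℝ) = fun _ => (1 : ℝ) from rfl, pi_norm_const]
      exact norm_one
    rw [hnorm, one_mul]
    have hsplit := erase_split (TSet A) j (fun k => ‖A j k‖)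
    have hlt := hTlt j hj
    unfold rowSum rowSumOn at hlt
    unfold rowSumOn
    linarith
  · intro h
    by_cases hT : TSet A = ∅
    · refine ⟨fun _ => 1, fun _ => one_pos, fun i => ?_⟩
      rw [rowSum_mul_diag A (fun _ => (1 : ℝ)) (fun _ => zero_le_one)]
      have hdiag : ‖(A * Matrix.diagonal fun _ : Fin n => ((1 : ℝ) : ℂ)) i i‖
          = ‖A i i‖ * 1 := by
        rw [Matrix.mul_diagonal, abs_mul_real _ _ zero_le_one]
      rw [hdiag]
      have hi : i ∉ TSet A := hT ▸ Finset.notMem_empty i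
      have hlt := hTlt i hi
      unfold rowSum rowSumOn at hlt
      simp only [mul_one]
      exact hlt
    · rcases h with h | ⟨hsub, _⟩
      · exact absurd h hT
      obtain ⟨y, hy, hyS⟩ := hsub
      set Y : Fin n → ℝ := fun j => if hj : j ∈ TSet A then y ⟨j, hj⟩ else 1 with hYdef
      have hY : ∀ j, 0 < Y j := by
        intro j; by_cases hj : j ∈ TSet A <;> simp [hYdef, hj, hy]
      set S : Fin n → ℝ := fun j => ∑ k ∈ (TSet A).erase j, ‖A j k‖ * Y k with hSdef
      have hS0 : ∀ j, 0 ≤ S j := fun j =>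
        Finset.sum_nonneg fun k _ => mul_nonneg (norm_nonneg _) (hY k).le
      set f : Fin n → ℝ := fun j => if j ∈ TSet A then 1
        else (‖A j j‖ - rowSum A j) / (S j + 1) with hfdef
      have hfpos : ∀ j, 0 < f j := by
        intro j
        by_cases hj : j ∈ TSet A
        · simp [hfdef, hj]
        · simp only [hfdef, if_neg hj]
          exact div_pos (sub_pos.mpr (hTlt j hj)) (by linarith [hS0 j])
      have hne : (Finset.univ : Finset (Fin n)).Nonempty := ⟨⟨0, by omega⟩, Finset.mem_univ _⟩
      set ε := Finset.univ.inf' hne f with hεdef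
      have hε : 0 < ε := by
        rw [hεdef, Finset.lt_inf'_iff]
        exact fun i _ => hfpos i
      have hεle : ∀ j, ε ≤ f j := fun j => Finset.inf'_le f (Finset.mem_univ j)
      set d : Fin n → ℝ := fun i => if i ∈ TSet A then 1 + ε * Y i else 1 with hddef
      have hd : ∀ i, 0 < d i := by
        intro i
        by_cases hi : i ∈ TSet A
        · simp only [hddef, if_pos hi]
          nlinarith [hY i, hε]
        · simp [hddef, hi]
      refine ⟨d, hd, fun i => ?_⟩
      rw [rowSum_mul_diag A d (fun j => (hd j).le)]
      have hdiag : ‖(A * Matrix.diagonal fun j => ((d j : ℝ) : ℂ)) i i‖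
          = ‖A i i‖ * d i := by
        rw [Matrix.mul_diagonal, abs_mul_real _ _ (hd i).le]
      rw [hdiag]
      rw [erase_split (TSet A) i (fun j => ‖A i j‖ * d j)]
      have hTsum : ∑ j ∈ (TSet A).erase i, ‖A i j‖ * d j
          = (∑ j ∈ (TSet A).erase i, ‖A i j‖) + ε * S i := by
        rw [hSdef, Finset.mul_sum, ← Finset.sum_add_distrib]
        refine Finset.sum_congr rfl fun j hj => ?_
        have hjT : j ∈ TSet A := Finset.mem_of_mem_erase hj
        rw [hddef]; simp only [if_pos hjT]; ring
      have hCsum : ∑ j ∈ (TSet A)ᶜ.erase i, ‖A i j‖ * d j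
          = ∑ j ∈ (TSet A)ᶜ.erase i, ‖A i j‖ := by
        refine Finset.sum_congr rfl fun j hj => ?_
        have hjT : j ∉ TSet A := by
          have := Finset.mem_of_mem_erase hj
          simpa [Finset.mem_compl] using this
        rw [hddef]; simp [hjT]
      rw [hTsum, hCsum]
      have hsplit := erase_split (TSet A) i (fun j => ‖A i j‖)
      by_cases hi : i ∈ TSet A
      · have hkey : S i < ‖A i i‖ * Y i := by
          have h5 := hyS ⟨i, hi⟩
          rw [rowSum_mul_diag (subMat A (TSet A)) y (fun j => (hy j).le) ⟨i, hi⟩] at h5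
          have hdiag5 : ‖(subMat A (TSet A) * Matrix.diagonal fun j => ((y j : ℝ) : ℂ)) ⟨i, hi⟩ ⟨i, hi⟩‖
              = ‖A i i‖ * y ⟨i, hi⟩ := by
            rw [Matrix.mul_diagonal, abs_mul_real _ _ (hy _).le]; rfl
          rw [hdiag5] at h5
          have h6 : ∑ j ∈ (Finset.univ.erase (⟨i, hi⟩ : {x // x ∈ TSet A})),
              ‖subMat A (TSet A) ⟨i, hi⟩ j‖ * y j = S i := by
            have e := sum_subtype_erase (TSet A) (fun j => ‖A i j‖ * Y j) ⟨i, hi⟩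
            calc ∑ j ∈ (Finset.univ.erase (⟨i, hi⟩ : {x // x ∈ TSet A})),
                  ‖subMat A (TSet A) ⟨i, hi⟩ j‖ * y j
                = ∑ j ∈ (Finset.univ.erase (⟨i, hi⟩ : {x // x ∈ TSet A})),
                  ‖A i j.val‖ * Y j.val := by
                  refine Finset.sum_congr rfl fun j hj => ?_
                  have hYj : Y j.val = y j := dif_pos j.2
                  rw [hYj]; rfl
              _ = S i := e
          rw [h6] at h5
          have hYi : Y i = y ⟨i, hi⟩ := dif_pos hi
          rw [hYi]
          exact h5
        have hieq := hTeq i hi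
        rw [hddef]
        simp only [if_pos hi]
        have hmul := mul_lt_mul_of_pos_left hkey hε
        unfold rowSum rowSumOn at hieq
        nlinarith [hmul, hsplit, hieq]
      · rw [hddef]
        simp only [if_neg hi, mul_one]
        have hεf := hεle i
        rw [hfdef] at hεf
        simp only [if_neg hi] at hεf
        have h1 : ε * S i ≤ (‖A i i‖ - rowSum A i) / (S i + 1) * S i :=
          mul_le_mul_of_nonneg_right hεf (hS0 i)
        have h2 : (‖A i i‖ - rowSum A i) / (S i + 1) * S i
            < ‖A i i‖ - rowSum A i := by
          rw [div_mul_eq_mul_div, div_lt_iff₀ (by linarith [hS0 i])]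
          nlinarith [hTlt i hi, hS0 i]
        have hlt := hTlt i hi
        unfold rowSum rowSumOn at h1 h2 hlt
        linarith

end
end
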